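/- arXiv:math/0304205 — 2 statements merged into one kernel-verified Lean document; each statement's English description precedes it below -/
import Mathlib

section
/- Let Ω be an infinite set. Then the symmetric group Sym(Ω) has uncountable cofinality: there is no countable strictly increasing chain H₀ < H₁ < H₂ < ⋯ of proper subgroups of Sym(Ω) whose union is Sym(Ω). -/
open Equiv Set Cardinal

namespace MNproof

theorem perm_apply_inv_self {α : Type*} (f : Equiv.Perm α) (x : α) : f (f⁻¹ x) = x :=
  f.apply_symm_apply x

theorem perm_inv_apply_self {α : Type*} (f : Equiv.Perm α) (x : α) : f⁻¹ (f x) = x :=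
  f.symm_apply_apply x

/-! ### A piecewise permutation from two disjoint set-equivalences -/

open Classical in
noncomputable def threePerm {X : Type*} (s₁ s₂ t₁ t₂ : Set X) (e₁ : ↥s₁ ≃ ↥t₁) (e₂ : ↥s₂ ≃ ↥t₂)
    (hs : Disjoint s₁ s₂) (ht : Disjoint t₁ t₂) (hU : s₁ ∪ s₂ = t₁ ∪ t₂) : Equiv.Perm X where
  toFun x := if h : x ∈ s₁ then (e₁ ⟨x, h⟩ : X) else if h : x ∈ s₂ then (e₂ ⟨x, h⟩ : X) else x
  invFun y := if h : y ∈ t₁ then (e₁.symm ⟨y, h⟩ : X) else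
    if h : y ∈ t₂ then (e₂.symm ⟨y, h⟩ : X) else y
  left_inv := by
    intro x
    by_cases h1 : x ∈ s₁
    · simp only [dif_pos h1]
      have ht1 : (e₁ ⟨x, h1⟩ : X) ∈ t₁ := (e₁ ⟨x, h1⟩).2
      rw [dif_pos ht1]
      have : (⟨(e₁ ⟨x, h1⟩ : X), ht1⟩ : ↥t₁) = e₁ ⟨x, h1⟩ := Subtype.ext rfl
      rw [this, Equiv.symm_apply_apply]
    · by_cases h2 : x ∈ s₂
      · simp only [dif_neg h1, dif_pos h2]
        have ht2 : (e₂ ⟨x, h2⟩ : X) ∈ t₂ := (e₂ ⟨x, h2⟩).2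
        have hnt1 : (e₂ ⟨x, h2⟩ : X) ∉ t₁ := fun hmem => (Set.disjoint_left.mp ht hmem) ht2
        rw [dif_neg hnt1, dif_pos ht2]
        have : (⟨(e₂ ⟨x, h2⟩ : X), ht2⟩ : ↥t₂) = e₂ ⟨x, h2⟩ := Subtype.ext rfl
        rw [this, Equiv.symm_apply_apply]
      · simp only [dif_neg h1, dif_neg h2]
        have hx : x ∉ t₁ ∪ t₂ := by
          rw [← hU]; intro hx; rcases hx with h | h; exact h1 h; exact h2 h
        rw [dif_neg fun h => hx (Or.inl h), dif_neg fun h => hx (Or.inr h)]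
  right_inv := by
    intro y
    by_cases h1 : y ∈ t₁
    · simp only [dif_pos h1]
      have hs1 : (e₁.symm ⟨y, h1⟩ : X) ∈ s₁ := (e₁.symm ⟨y, h1⟩).2
      rw [dif_pos hs1]
      have : (⟨(e₁.symm ⟨y, h1⟩ : X), hs1⟩ : ↥s₁) = e₁.symm ⟨y, h1⟩ := Subtype.ext rfl
      rw [this, Equiv.apply_symm_apply]
    · by_cases h2 : y ∈ t₂
      · simp only [dif_neg h1, dif_pos h2]
        have hs2 : (e₂.symm ⟨y, h2⟩ : X) ∈ s₂ := (e₂.symm ⟨y, h2⟩).2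
        have hns1 : (e₂.symm ⟨y, h2⟩ : X) ∉ s₁ := fun hmem => (Set.disjoint_left.mp hs hmem) hs2
        rw [dif_neg hns1, dif_pos hs2]
        have : (⟨(e₂.symm ⟨y, h2⟩ : X), hs2⟩ : ↥s₂) = e₂.symm ⟨y, h2⟩ := Subtype.ext rfl
        rw [this, Equiv.apply_symm_apply]
      · simp only [dif_neg h1, dif_neg h2]
        have hy : y ∉ s₁ ∪ s₂ := by
          rw [hU]; intro hy; rcases hy with h | h; exact h1 h; exact h2 h
        rw [dif_neg fun h => hy (Or.inl h), dif_neg fun h => hy (Or.inr h)]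

open Classical in
theorem threePerm_apply_mem₁ {X : Type*} {s₁ s₂ t₁ t₂ : Set X} (e₁ : ↥s₁ ≃ ↥t₁) (e₂ : ↥s₂ ≃ ↥t₂)
    (hs : Disjoint s₁ s₂) (ht : Disjoint t₁ t₂) (hU : s₁ ∪ s₂ = t₁ ∪ t₂) {x : X} (hx : x ∈ s₁) :
    threePerm s₁ s₂ t₁ t₂ e₁ e₂ hs ht hU x = (e₁ ⟨x, hx⟩ : X) := by
  simp only [threePerm, Equiv.coe_fn_mk, dif_pos hx]

open Classical in
theorem threePerm_apply_mem₂ {X : Type*} {s₁ s₂ t₁ t₂ : Set X} (e₁ : ↥s₁ ≃ ↥t₁) (e₂ : ↥s₂ ≃ ↥t₂)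
    (hs : Disjoint s₁ s₂) (ht : Disjoint t₁ t₂) (hU : s₁ ∪ s₂ = t₁ ∪ t₂) {x : X} (hx : x ∈ s₂) :
    threePerm s₁ s₂ t₁ t₂ e₁ e₂ hs ht hU x = (e₂ ⟨x, hx⟩ : X) := by
  have h1 : x ∉ s₁ := fun h => (Set.disjoint_left.mp hs h) hx
  simp only [threePerm, Equiv.coe_fn_mk, dif_neg h1, dif_pos hx]

open Classical in
theorem threePerm_apply_not_mem {X : Type*} {s₁ s₂ t₁ t₂ : Set X} (e₁ : ↥s₁ ≃ ↥t₁)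
    (e₂ : ↥s₂ ≃ ↥t₂) (hs : Disjoint s₁ s₂) (ht : Disjoint t₁ t₂) (hU : s₁ ∪ s₂ = t₁ ∪ t₂)
    {x : X} (hx1 : x ∉ s₁) (hx2 : x ∉ s₂) :
    threePerm s₁ s₂ t₁ t₂ e₁ e₂ hs ht hU x = x := by
  simp only [threePerm, Equiv.coe_fn_mk, dif_neg hx1, dif_neg hx2]


/-! ### Block permutations on a product -/

section Blocks

variable {Ω : Type*} {J : Type*}

/-- Block-diagonal permutation: acts as `f j` on the fiber over `j`. -/
def bp (f : J → Equiv.Perm Ω) : Equiv.Perm (Ω × J) where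
  toFun p := (f p.2 p.1, p.2)
  invFun p := ((f p.2)⁻¹ p.1, p.2)
  left_inv p := by simp
  right_inv p := by simp

@[simp] theorem bp_apply (f : J → Equiv.Perm Ω) (p : Ω × J) :
    bp f p = (f p.2 p.1, p.2) := rfl

theorem bp_mul (f g : J → Equiv.Perm Ω) : bp f * bp g = bp (fun j => f j * g j) := by
  ext p <;> rfl

@[simp] theorem bp_one : bp (fun _ : J => (1 : Equiv.Perm Ω)) = 1 := by
  ext p <;> rfl

theorem bp_inv (f : J → Equiv.Perm Ω) : (bp f)⁻¹ = bp (fun j => (f j)⁻¹) := by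
  have h : bp f * bp (fun j => (f j)⁻¹) = 1 := by
    rw [bp_mul]; simp
  exact inv_eq_of_mul_eq_one_right h

theorem bp_injective : Function.Injective (bp : (J → Equiv.Perm Ω) → Equiv.Perm (Ω × J)) := by
  intro f g h
  funext j
  ext x
  have := congrArg (fun (σ : Equiv.Perm (Ω × J)) => σ (x, j)) h
  simpa using congrArg Prod.fst this

/-- Structural permutation permuting the blocks. -/
def st (π : Equiv.Perm J) : Equiv.Perm (Ω × J) where
  toFun p := (p.1, π p.2)
  invFun p := (p.1, π⁻¹ p.2)
  left_inv p := by simp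
  right_inv p := by simp

@[simp] theorem st_apply (π : Equiv.Perm J) (p : Ω × J) : (st (Ω := Ω) π) p = (p.1, π p.2) := rfl

theorem st_inv (π : Equiv.Perm J) : (st (Ω := Ω) π)⁻¹ = st π⁻¹ := rfl

theorem st_conj_bp (π : Equiv.Perm J) (f : J → Equiv.Perm Ω) :
    st π * bp f * (st π)⁻¹ = bp (fun j => f (π⁻¹ j)) := by
  ext p
  · show (st π (bp f ((st π)⁻¹ p))).1 = _
    rfl
  · show (st π (bp f ((st π)⁻¹ p))).2 = _
    simp [st_inv]

variable [DecidableEq J]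

/-- Copy of a permutation of `Ω` supported on the single block `t`. -/
def ione (t : J) (c : Equiv.Perm Ω) : Equiv.Perm (Ω × J) :=
  bp (fun j => if j = t then c else 1)

theorem ione_apply_mem (t : J) (c : Equiv.Perm Ω) (x : Ω) : ione t c (x, t) = (c x, t) := by
  simp [ione]

theorem ione_apply_not_mem (t : J) (c : Equiv.Perm Ω) {p : Ω × J} (h : p.2 ≠ t) :
    ione t c p = p := by
  simp [ione, if_neg h]

theorem ione_mul (t : J) (c d : Equiv.Perm Ω) : ione t c * ione t d = ione t (c * d) := by
  rw [ione, ione, bp_mul]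
  congr 1
  funext j
  by_cases h : j = t <;> simp [h]

theorem ione_one (t : J) : ione t (1 : Equiv.Perm Ω) = 1 := by
  rw [ione]
  have h : (fun j => if j = t then (1 : Equiv.Perm Ω) else 1) = fun _ => (1 : Equiv.Perm Ω) := by
    funext j; split <;> rfl
  rw [h, bp_one]

theorem ione_inv (t : J) (c : Equiv.Perm Ω) : ione t c⁻¹ = (ione t c)⁻¹ := by
  apply eq_inv_of_mul_eq_one_left
  rw [ione_mul]
  simp [ione_one]

/-- Any permutation supported on a single block is of the form `ione t c`. -/
theorem exists_ione (t : J) (σ : Equiv.Perm (Ω × J)) (hs : ∀ p : Ω × J, p.2 ≠ t → σ p = p) :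
    ∃ c : Equiv.Perm Ω, σ = ione t c := by
  have hsnd : ∀ x : Ω, (σ (x, t)).2 = t := by
    intro x
    by_contra hne
    have hfix : σ (σ (x, t)) = σ (x, t) := hs _ hne
    have := σ.injective hfix
    rw [this] at hne
    exact hne rfl
  have hsnd' : ∀ x : Ω, (σ⁻¹ (x, t)).2 = t := by
    intro x
    by_contra hne
    have hfix : σ (σ⁻¹ (x, t)) = σ⁻¹ (x, t) := hs _ hne
    rw [perm_apply_inv_self] at hfix
    rw [← hfix] at hne
    exact hne rfl
  refine ⟨⟨fun x => (σ (x, t)).1, fun x => (σ⁻¹ (x, t)).1, ?_, ?_⟩, ?_⟩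
  · intro x
    show (σ⁻¹ ((σ (x, t)).1, t)).1 = x
    have h1 : ((σ (x, t)).1, t) = σ (x, t) := Prod.ext rfl (hsnd x).symm
    rw [h1, perm_inv_apply_self]
  · intro x
    show (σ ((σ⁻¹ (x, t)).1, t)).1 = x
    have h1 : ((σ⁻¹ (x, t)).1, t) = σ⁻¹ (x, t) := Prod.ext rfl (hsnd' x).symm
    rw [h1, perm_apply_inv_self]
  · ext p
    · show (σ p).1 = (ione t _ p).1
      rcases p with ⟨x, j⟩
      by_cases h : j = t
      · subst h
        rw [ione_apply_mem]
        rfl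
      · rw [hs _ h, ione_apply_not_mem _ _ h]
    · show (σ p).2 = (ione t _ p).2
      rcases p with ⟨x, j⟩
      by_cases h : j = t
      · subst h
        rw [ione_apply_mem]
        exact hsnd x
      · rw [hs _ h, ione_apply_not_mem _ _ h]

end Blocks


/-! ### A permutation supported on a "small" set is a commutator -/

section Swindle

variable {X : Type*}

theorem mem_iff_apply_mem_of_supported {S : Set X} {u : Equiv.Perm X}
    (hu : ∀ x ∉ S, u x = x) : ∀ x : X, x ∈ S ↔ u x ∈ S := by
  intro x
  constructor
  · intro hx
    by_contra hux
    have h2 : u (u x) = u x := hu _ hux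
    have h3 : u x = x := u.injective h2
    rw [h3] at hux
    exact hux hx
  · intro hux
    by_contra hx
    rw [hu x hx] at hux
    exact hx hux

theorem supported_is_commutator {S : Set X} (u : Equiv.Perm X) (hu : ∀ x ∉ S, u x = x)
    (emb : ↥S × ℤ ↪ X) (h0 : ∀ s : ↥S, emb (s, 0) = s.val)
    (h1 : ∀ (s : ↥S) (n : ℤ), n ≠ 0 → emb (s, n) ∉ S) :
    ∃ a b : Equiv.Perm X, u = a * b * a⁻¹ * b⁻¹ := by
  classical
  set u' : Equiv.Perm ↥S := u.subtypePerm (fun x => (mem_iff_apply_mem_of_supported hu x).symm) with hu'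
  set g : ℤ → Equiv.Perm ↥S := fun n => if 0 ≤ n then u' else 1 with hg
  set P : Equiv.Perm (↥S × ℤ) := bp g with hP
  set Sh : Equiv.Perm (↥S × ℤ) := st (Equiv.addRight (1 : ℤ)) with hSh
  have e1 : ∀ n : ℤ, (Equiv.addRight (1:ℤ))⁻¹ n = n - 1 := by
    intro n
    have h := perm_apply_inv_self (Equiv.addRight (1:ℤ)) n
    have h2 : ∀ m : ℤ, Equiv.addRight (1:ℤ) m = m + 1 := fun m => rfl
    rw [h2] at h
    omega
  have key : Sh * P⁻¹ * Sh⁻¹ * P = ione (0 : ℤ) u' := by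
    rw [hP, bp_inv, hSh, st_conj_bp, bp_mul, ione]
    congr 1
    funext n
    show (g ((Equiv.addRight (1:ℤ))⁻¹ n))⁻¹ * g n = if n = 0 then u' else 1
    rw [e1 n, hg]
    simp only []
    by_cases hn : n = 0
    · subst hn
      rw [if_neg (by omega : ¬ (0:ℤ) ≤ 0 - 1), if_pos (le_refl (0:ℤ)), if_pos rfl]
      simp
    · rw [if_neg hn]
      by_cases hpos : 0 ≤ n
      · rw [if_pos hpos, if_pos (by omega : (0:ℤ) ≤ n - 1)]
        simp
      · rw [if_neg hpos, if_neg (by omega : ¬ (0:ℤ) ≤ n - 1)]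
        simp
  set f' : (↥S × ℤ) ≃ ↥(Set.range ⇑emb) := Equiv.ofInjective ⇑emb emb.injective with hf'
  set φ : Equiv.Perm (↥S × ℤ) →* Equiv.Perm X := Equiv.Perm.extendDomainHom f' with hφ
  refine ⟨φ Sh, φ P⁻¹, ?_⟩
  have hcomm : φ Sh * φ P⁻¹ * (φ Sh)⁻¹ * (φ P⁻¹)⁻¹ = φ (Sh * P⁻¹ * Sh⁻¹ * P) := by
    rw [← map_inv, ← map_inv, inv_inv, ← map_mul, ← map_mul, ← map_mul]
  rw [hcomm, key]
  -- now show `u = φ (ione 0 u')`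
  ext x
  by_cases hx : x ∈ Set.range ⇑emb
  · obtain ⟨⟨s, n⟩, rfl⟩ := hx
    have himg : φ (ione (0:ℤ) u') (⇑emb (s, n)) = ⇑emb (ione (0:ℤ) u' (s, n)) := by
      have := Equiv.Perm.extendDomain_apply_image (ione (0:ℤ) u') f' (s, n)
      simpa [hφ, hf'] using this
    rw [himg]
    by_cases hn : n = 0
    · subst hn
      rw [ione_apply_mem, h0, h0]
      show u s.val = (u' s : X)
      rfl
    · rw [ione_apply_not_mem _ _ (by exact hn)]
      rw [hu _ (h1 s n hn)]
  · have hfix : φ (ione (0:ℤ) u') x = x := by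
      exact Equiv.Perm.extendDomain_apply_not_subtype _ _ hx
    rw [hfix]
    apply hu
    intro hxS
    exact hx ⟨(⟨x, hxS⟩, 0), h0 _⟩

end Swindle


/-! ### The factorization lemma: a subgroup containing all permutations supported on two
overlapping "moieties" contains everything -/

section Factorization

variable {X : Type*}

open Cardinal

theorem case1_mem {E T F : Set X}
    (hET : Disjoint E T) (hEF : Disjoint E F) (hTF : Disjoint T F)
    (hcover : E ∪ T ∪ F = Set.univ)
    (hX : ℵ₀ ≤ #X) (hT : #↥T = #X) (hF : #↥F = #X)
    (H : Subgroup (Equiv.Perm X))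
    (hU : ∀ σ : Equiv.Perm X, (∀ x ∈ F, σ x = x) → σ ∈ H)
    (hV : ∀ σ : Equiv.Perm X, (∀ x ∈ E, σ x = x) → σ ∈ H)
    (π : Equiv.Perm X)
    (hbig : #↥{x | x ∈ T ∪ F ∧ π x ∈ T ∪ F} = #X) : π ∈ H := by
  classical
  set V : Set X := T ∪ F with hVdef
  set W : Set X := {x | x ∈ V ∧ π x ∈ V} with hWdef
  -- split `W` into two full-size pieces
  have hsum : #(↥W ⊕ ↥W) = #↥W := by
    simp only [Cardinal.mk_sum, Cardinal.lift_id, hbig]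
    exact Cardinal.add_eq_self hX
  obtain ⟨q⟩ := Cardinal.eq.mp hsum
  set S₁ : Set X := Subtype.val '' (Set.range fun w : ↥W => q (Sum.inl w)) with hS₁def
  set S₂ : Set X := Subtype.val '' (Set.range fun w : ↥W => q (Sum.inr w)) with hS₂def
  have hS₁W : S₁ ⊆ W := by rintro x ⟨y, -, rfl⟩; exact y.2
  have hS₂W : S₂ ⊆ W := by rintro x ⟨y, -, rfl⟩; exact y.2
  have hS₁S₂ : Disjoint S₁ S₂ := by
    rw [Set.disjoint_left]
    rintro x ⟨y, ⟨w, rfl⟩, rfl⟩ ⟨y', ⟨w', hw'⟩, hval⟩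
    have : y' = q (Sum.inl w) := Subtype.ext hval
    rw [this] at hw'
    exact Sum.inr_ne_inl (q.injective hw')
  have hS₁card : #↥S₁ = #X := by
    rw [hS₁def, Cardinal.mk_image_eq Subtype.val_injective,
      Cardinal.mk_range_eq _ (fun a b hab => Sum.inl_injective (q.injective hab))]
    exact hbig
  have hS₂card : #↥S₂ = #X := by
    rw [hS₂def, Cardinal.mk_image_eq Subtype.val_injective,
      Cardinal.mk_range_eq _ (fun a b hab => Sum.inr_injective (q.injective hab))]
    exact hbig
  have hS₁V : S₁ ⊆ V := fun x hx => (hS₁W hx).1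
  have hS₂V : S₂ ⊆ V := fun x hx => (hS₂W hx).1
  set A₁ : Set X := π '' S₁ with hA₁def
  have hA₁card : #↥A₁ = #X := by
    rw [hA₁def, Cardinal.mk_image_eq π.injective]; exact hS₁card
  have hA₁V : A₁ ⊆ V := by rintro x ⟨y, hy, rfl⟩; exact (hS₁W hy).2
  have hVS₁card : #↥(V \ S₁) = #X := by
    apply le_antisymm (Cardinal.mk_set_le _)
    rw [← hS₂card]
    apply Cardinal.mk_le_mk_of_subset
    intro x hx
    exact ⟨hS₂V hx, Set.disjoint_right.mp hS₁S₂ hx⟩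
  have hVA₁card : #↥(V \ A₁) = #X := by
    apply le_antisymm (Cardinal.mk_set_le _)
    have hsub : π '' S₂ ⊆ V \ A₁ := by
      rintro x ⟨y, hy, rfl⟩
      refine ⟨(hS₂W hy).2, ?_⟩
      rintro ⟨y', hy', heq⟩
      have : y' = y := π.injective heq
      rw [this] at hy'
      exact Set.disjoint_left.mp hS₁S₂ hy' hy
    calc #X = #↥(π '' S₂) := by rw [Cardinal.mk_image_eq π.injective, hS₂card]
    _ ≤ #↥(V \ A₁) := Cardinal.mk_le_mk_of_subset hsub
  -- the two auxiliary permutations supported on V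
  obtain ⟨eF1⟩ := Cardinal.eq.mp (hF.trans hS₁card.symm)
  obtain ⟨eT1⟩ := Cardinal.eq.mp (hT.trans hVS₁card.symm)
  obtain ⟨eA1⟩ := Cardinal.eq.mp (hA₁card.trans hF.symm)
  obtain ⟨eA2⟩ := Cardinal.eq.mp (hVA₁card.trans hT.symm)
  have hFT : Disjoint F T := hTF.symm
  have hdisj₁ : Disjoint S₁ (V \ S₁) := Set.disjoint_sdiff_right
  have hdisjA : Disjoint A₁ (V \ A₁) := Set.disjoint_sdiff_right
  have hunion₀ : F ∪ T = S₁ ∪ (V \ S₁) := by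
    rw [Set.union_diff_cancel hS₁V, hVdef, Set.union_comm]
  have hunionA : A₁ ∪ (V \ A₁) = F ∪ T := by
    rw [Set.union_diff_cancel hA₁V, hVdef, Set.union_comm]
  set v₀ : Equiv.Perm X := threePerm F T S₁ (V \ S₁) eF1 eT1 hFT hdisj₁ hunion₀ with hv₀
  set v₁ : Equiv.Perm X := threePerm A₁ (V \ A₁) F T eA1 eA2 hdisjA hFT hunionA with hv₁
  have hv₀E : ∀ x ∈ E, v₀ x = x := fun x hx =>
    threePerm_apply_not_mem _ _ _ _ _ (Set.disjoint_left.mp hEF hx)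
      (Set.disjoint_left.mp hET hx)
  have hv₁E : ∀ x ∈ E, v₁ x = x := by
    intro x hx
    have h1 : x ∉ A₁ := fun h => Set.disjoint_left.mp hEF hx ((hA₁V h).elim
      (fun ht => absurd ht (Set.disjoint_left.mp hET hx)) id)
    have h2 : x ∉ V \ A₁ := fun h => (h.1.elim
      (fun ht => Set.disjoint_left.mp hET hx ht) (fun hf => Set.disjoint_left.mp hEF hx hf))
    exact threePerm_apply_not_mem _ _ _ _ _ h1 h2
  set ρ : Equiv.Perm X := v₁ * π * v₀ with hρ
  -- ρ maps F to F
  have hv₀F : ∀ x ∈ F, v₀ x ∈ S₁ := by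
    intro x hx
    rw [hv₀, threePerm_apply_mem₁ _ _ _ _ _ hx]
    exact (eF1 ⟨x, hx⟩).2
  have hv₁A : ∀ y ∈ A₁, v₁ y ∈ F := by
    intro y hy
    rw [hv₁, threePerm_apply_mem₁ _ _ _ _ _ hy]
    exact (eA1 ⟨y, hy⟩).2
  have hv₁F_back : ∀ y, v₁ y ∈ F → y ∈ A₁ := by
    intro y hyF
    by_cases h1 : y ∈ A₁
    · exact h1
    · by_cases h2 : y ∈ V \ A₁
      · rw [hv₁, threePerm_apply_mem₂ _ _ _ _ _ h2] at hyF
        exact absurd hyF (Set.disjoint_right.mp hFT ((eA2 ⟨y, h2⟩).2))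
      · rw [hv₁, threePerm_apply_not_mem _ _ _ _ _ h1 h2] at hyF
        exfalso
        have : y ∈ V := Set.mem_union_right _ hyF
        exact h2 ⟨this, h1⟩
  have hv₀S₁_back : ∀ x, v₀ x ∈ S₁ → x ∈ F := by
    intro x hxS
    by_cases h1 : x ∈ F
    · exact h1
    · by_cases h2 : x ∈ T
      · rw [hv₀, threePerm_apply_mem₂ _ _ _ _ _ h2] at hxS
        exact absurd hxS (Set.disjoint_right.mp hdisj₁ ((eT1 ⟨x, h2⟩).2))
      · rw [hv₀, threePerm_apply_not_mem _ _ _ _ _ h1 h2] at hxS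
        exfalso
        rcases hS₁V hxS with ht | hf
        · exact h2 ht
        · exact h1 hf
  have hρF : ∀ x, x ∈ F ↔ ρ x ∈ F := by
    intro x
    constructor
    · intro hx
      show v₁ (π (v₀ x)) ∈ F
      exact hv₁A _ (Set.mem_image_of_mem _ (hv₀F x hx))
    · intro hx
      have h1 : π (v₀ x) ∈ A₁ := hv₁F_back _ hx
      obtain ⟨y, hy, heq⟩ := h1
      have : v₀ x ∈ S₁ := by
        have h5 := π.injective heq
        rwa [h5] at hy
      exact hv₀S₁_back _ this
  set ρF : Equiv.Perm X := Equiv.Perm.ofSubtype (ρ.subtypePerm (fun x => (hρF x).symm)) with hρFdef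
  have hρF_mem : ∀ x ∈ F, ρF x = ρ x := by
    intro x hx
    rw [hρFdef, Equiv.Perm.ofSubtype_apply_of_mem _ hx]
    rfl
  have hρF_not : ∀ x, x ∉ F → ρF x = x := by
    intro x hx
    rw [hρFdef, Equiv.Perm.ofSubtype_apply_of_not_mem _ hx]
  set ρU : Equiv.Perm X := ρ * ρF⁻¹ with hρUdef
  have hρU_fix : ∀ x ∈ F, ρU x = x := by
    intro x hx
    show ρ (ρF⁻¹ x) = x
    set y := ρF⁻¹ x with hy
    have hyx : ρF y = x := by rw [hy]; exact perm_apply_inv_self _ _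
    have hyF : y ∈ F := by
      by_contra hyn
      rw [hρF_not y hyn] at hyx
      rw [hyx] at hyn
      exact hyn hx
    rw [← hyx, hρF_mem y hyF]
  -- memberships
  have hv₀H : v₀ ∈ H := hV _ hv₀E
  have hv₁H : v₁ ∈ H := hV _ hv₁E
  have hρFH : ρF ∈ H := hV _ (fun x hx => hρF_not x (Set.disjoint_left.mp hEF hx))
  have hρUH : ρU ∈ H := hU _ hρU_fix
  have hfinal : π = v₁⁻¹ * ρU * ρF * v₀⁻¹ := by
    rw [hρUdef, hρ]
    group
  rw [hfinal]
  exact H.mul_mem (H.mul_mem (H.mul_mem (H.inv_mem hv₁H) hρUH) hρFH) (H.inv_mem hv₀H)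

theorem factorization_mem {E T F : Set X}
    (hET : Disjoint E T) (hEF : Disjoint E F) (hTF : Disjoint T F)
    (hcover : E ∪ T ∪ F = Set.univ)
    (hX : ℵ₀ ≤ #X) (hE : #↥E = #X) (hT : #↥T = #X) (hF : #↥F = #X)
    (H : Subgroup (Equiv.Perm X))
    (hU : ∀ σ : Equiv.Perm X, (∀ x ∈ F, σ x = x) → σ ∈ H)
    (hV : ∀ σ : Equiv.Perm X, (∀ x ∈ E, σ x = x) → σ ∈ H)
    (π : Equiv.Perm X) : π ∈ H := by
  classical
  set V : Set X := T ∪ F with hVdef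
  by_cases hbig : #↥{x | x ∈ V ∧ π x ∈ V} = #X
  · exact case1_mem hET hEF hTF hcover hX hT hF H hU hV π hbig
  · -- then the set of points of `E` sent into `V` is large
    have hVcard : #↥V = #X := by
      apply le_antisymm (Cardinal.mk_set_le _)
      rw [← hT]
      exact Cardinal.mk_le_mk_of_subset Set.subset_union_left
    have hunion_eq : {x | x ∈ V ∧ π x ∈ V} ∪ {x | x ∈ E ∧ π x ∈ V} = {x | π x ∈ V} := by
      ext x
      simp only [Set.mem_union, Set.mem_setOf_eq]
      constructor
      · rintro (⟨-, h⟩ | ⟨-, h⟩) <;> exact h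
      · intro h
        have hx : x ∈ E ∪ T ∪ F := by rw [hcover]; trivial
        rcases hx with (he | ht) | hf
        · exact Or.inr ⟨he, h⟩
        · exact Or.inl ⟨Or.inl ht, h⟩
        · exact Or.inl ⟨Or.inr hf, h⟩
    have hpre : #↥{x | π x ∈ V} = #X := by
      have : {x | π x ∈ V} = π.symm '' V := by
        ext x
        simp only [Set.mem_setOf_eq, Set.mem_image]
        constructor
        · intro h; exact ⟨π x, h, Equiv.symm_apply_apply _ _⟩
        · rintro ⟨y, hy, rfl⟩; rwa [Equiv.apply_symm_apply]
      rw [this, Cardinal.mk_image_eq π.symm.injective]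
      exact hVcard
    have hbig2 : #↥{x | x ∈ E ∧ π x ∈ V} = #X := by
      by_contra hne
      have h1 : #↥{x | x ∈ V ∧ π x ∈ V} < #X :=
        lt_of_le_of_ne (Cardinal.mk_set_le _) hbig
      have h2 : #↥{x | x ∈ E ∧ π x ∈ V} < #X :=
        lt_of_le_of_ne (Cardinal.mk_set_le _) hne
      have h3 := Cardinal.mk_union_le {x | x ∈ V ∧ π x ∈ V} {x | x ∈ E ∧ π x ∈ V}
      rw [hunion_eq, hpre] at h3
      exact absurd (lt_of_le_of_lt h3 (Cardinal.add_lt_of_lt hX h1 h2)) (lt_irrefl _)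
    set Sve : Set X := {x | x ∈ E ∧ π x ∈ V} with hSvedef
    obtain ⟨e⟩ := Cardinal.eq.mp (hbig2.trans hT.symm)
    have hSveE : Sve ⊆ E := fun x hx => hx.1
    have hdisj : Disjoint Sve T := hET.mono_left hSveE
    set u₀ : Equiv.Perm X := threePerm Sve T T Sve e e.symm hdisj hdisj.symm
      (Set.union_comm _ _) with hu₀
    have hu₀H : u₀ ∈ H := by
      apply hU
      intro x hx
      have h1 : x ∉ Sve := fun h => Set.disjoint_left.mp hEF (hSveE h) hx
      have h2 : x ∉ T := fun h => Set.disjoint_left.mp hTF h hx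
      exact threePerm_apply_not_mem _ _ _ _ _ h1 h2
    set π' : Equiv.Perm X := π * u₀ with hπ'
    have hbig' : #↥{x | x ∈ V ∧ π' x ∈ V} = #X := by
      apply le_antisymm (Cardinal.mk_set_le _)
      rw [← hT]
      apply Cardinal.mk_le_mk_of_subset
      intro x hx
      refine ⟨Or.inl hx, ?_⟩
      show π (u₀ x) ∈ V
      rw [hu₀, threePerm_apply_mem₂ _ _ _ _ _ hx]
      exact (e.symm ⟨x, hx⟩).2.2
    have hπ'H : π' ∈ H := case1_mem hET hEF hTF hcover hX hT hF H hU hV π' hbig'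
    have : π = π' * u₀⁻¹ := by rw [hπ']; group
    rw [this]
    exact H.mul_mem hπ'H (H.inv_mem hu₀H)

end Factorization


/-! ### Transporting permutation groups along an equivalence -/

noncomputable def permME {α β : Type*} (e : α ≃ β) : Equiv.Perm α ≃* Equiv.Perm β where
  toEquiv := e.permCongr
  map_mul' σ τ := by
    ext x
    simp [Equiv.permCongr_apply]

/-! ### Infinite symmetric groups are perfect -/

section Perfect

abbrev Jt : Type := Sum ℕ (Sum ℕ ℕ)

variable (Ω : Type*)

def setE : Set (Ω × Jt) := {p | ∃ k, p.2 = Sum.inl k}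
def setT : Set (Ω × Jt) := {p | ∃ k, p.2 = Sum.inr (Sum.inl k)}
def setF : Set (Ω × Jt) := {p | ∃ k, p.2 = Sum.inr (Sum.inr k)}

theorem setE_disj_setT : Disjoint (setE Ω) (setT Ω) := by
  rw [Set.disjoint_left]
  rintro p ⟨k, hk⟩ ⟨k', hk'⟩
  rw [hk] at hk'
  exact Sum.inl_ne_inr hk'

theorem setE_disj_setF : Disjoint (setE Ω) (setF Ω) := by
  rw [Set.disjoint_left]
  rintro p ⟨k, hk⟩ ⟨k', hk'⟩
  rw [hk] at hk'
  exact Sum.inl_ne_inr hk'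

theorem setT_disj_setF : Disjoint (setT Ω) (setF Ω) := by
  rw [Set.disjoint_left]
  rintro p ⟨k, hk⟩ ⟨k', hk'⟩
  rw [hk] at hk'
  have := Sum.inr_injective hk'
  exact Sum.inl_ne_inr this

theorem sets_cover : setE Ω ∪ setT Ω ∪ setF Ω = Set.univ := by
  ext p
  simp only [Set.mem_union, Set.mem_univ, iff_true]
  rcases p with ⟨x, (k | k | k)⟩
  · exact Or.inl (Or.inl ⟨k, rfl⟩)
  · exact Or.inl (Or.inr ⟨k, rfl⟩)
  · exact Or.inr ⟨k, rfl⟩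

variable [Infinite Ω]

theorem setE_card : #↥(setE Ω) = #(Ω × Jt) := by
  apply le_antisymm (Cardinal.mk_set_le _)
  have hinj : Function.Injective (fun p : Ω × Jt =>
      (⟨(p.1, Sum.inl (Encodable.encode p.2)), ⟨_, rfl⟩⟩ : ↥(setE Ω))) := by
    intro a b hab
    have h1 := congrArg (fun q : ↥(setE Ω) => q.val.1) hab
    have h2 := congrArg (fun q : ↥(setE Ω) => q.val.2) hab
    simp only at h1 h2
    have h3 := Sum.inl_injective h2
    exact Prod.ext h1 (Encodable.encode_injective h3)
  exact Cardinal.mk_le_of_injective hinj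

theorem setT_card : #↥(setT Ω) = #(Ω × Jt) := by
  apply le_antisymm (Cardinal.mk_set_le _)
  have hinj : Function.Injective (fun p : Ω × Jt =>
      (⟨(p.1, Sum.inr (Sum.inl (Encodable.encode p.2))), ⟨_, rfl⟩⟩ : ↥(setT Ω))) := by
    intro a b hab
    have h1 := congrArg (fun q : ↥(setT Ω) => q.val.1) hab
    have h2 := congrArg (fun q : ↥(setT Ω) => q.val.2) hab
    simp only at h1 h2
    have h3 := Sum.inl_injective (Sum.inr_injective h2)
    exact Prod.ext h1 (Encodable.encode_injective h3)
  exact Cardinal.mk_le_of_injective hinj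

theorem setF_card : #↥(setF Ω) = #(Ω × Jt) := by
  apply le_antisymm (Cardinal.mk_set_le _)
  have hinj : Function.Injective (fun p : Ω × Jt =>
      (⟨(p.1, Sum.inr (Sum.inr (Encodable.encode p.2))), ⟨_, rfl⟩⟩ : ↥(setF Ω))) := by
    intro a b hab
    have h1 := congrArg (fun q : ↥(setF Ω) => q.val.1) hab
    have h2 := congrArg (fun q : ↥(setF Ω) => q.val.2) hab
    simp only at h1 h2
    have h3 := Sum.inr_injective (Sum.inr_injective h2)
    exact Prod.ext h1 (Encodable.encode_injective h3)
  exact Cardinal.mk_le_of_injective hinj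

/-- Every permutation of `Ω × Jt` is a product of commutators. -/
theorem perm_prod_mem_commClosure (σ : Equiv.Perm (Ω × Jt)) :
    σ ∈ Subgroup.closure {g : Equiv.Perm (Ω × Jt) | ∃ a b, g = a * b * a⁻¹ * b⁻¹} := by
  classical
  apply factorization_mem (setE_disj_setT Ω) (setE_disj_setF Ω) (setT_disj_setF Ω)
    (sets_cover Ω) (Cardinal.aleph0_le_mk _) (setE_card Ω) (setT_card Ω) (setF_card Ω)
  · -- permutations fixing `setF` pointwise, i.e. supported in `setE ∪ setT`
    intro τ hτ
    set S : Set (Ω × Jt) := setE Ω ∪ setT Ω with hSdef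
    have hsupp : ∀ x ∉ S, τ x = x := by
      intro x hx
      apply hτ
      have hx2 : x ∈ setE Ω ∪ setT Ω ∪ setF Ω := by rw [sets_cover]; trivial
      rcases hx2 with h | h
      · exact absurd h hx
      · exact h
    have hSnotF : ∀ (x : Ω) (k : ℕ), (x, (Sum.inr (Sum.inr k) : Jt)) ∉ S := by
      rintro x k (⟨k', hk⟩ | ⟨k', hk⟩) <;> simp at hk
    set emb0 : ↥S × ℤ → Ω × Jt := fun sn =>
      if sn.2 = 0 then sn.1.val
      else (sn.1.val.1, Sum.inr (Sum.inr (Encodable.encode (sn.1.val.2, sn.2)))) with hemb0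
    have hinj : Function.Injective emb0 := by
      rintro ⟨s, n⟩ ⟨s', n'⟩ h
      rw [hemb0] at h
      simp only at h
      by_cases hn : n = 0 <;> by_cases hn' : n' = 0
      · rw [if_pos hn, if_pos hn'] at h
        subst hn; subst hn'
        exact Prod.ext (Subtype.ext h) rfl
      · rw [if_pos hn, if_neg hn'] at h
        exfalso
        have hs := s.2
        rw [h] at hs
        rcases hs with ⟨k, hk⟩ | ⟨k, hk⟩ <;> simp at hk
      · rw [if_neg hn, if_pos hn'] at h
        exfalso
        have hs := s'.2
        rw [← h] at hs
        rcases hs with ⟨k, hk⟩ | ⟨k, hk⟩ <;> simp at hk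
      · rw [if_neg hn, if_neg hn'] at h
        have h1 := congrArg Prod.fst h
        have h2 := congrArg Prod.snd h
        simp only at h1 h2
        have h3 := Encodable.encode_injective
          (Sum.inr_injective (Sum.inr_injective h2))
        have h4 : s.val.2 = s'.val.2 := congrArg Prod.fst h3
        have h5 : n = n' := congrArg Prod.snd h3
        refine Prod.ext (Subtype.ext (Prod.ext h1 h4)) h5
    obtain ⟨a, b, hab⟩ := supported_is_commutator τ hsupp ⟨emb0, hinj⟩
      (fun s => by simp [hemb0])
      (fun s n hn => by
        show emb0 (s, n) ∉ S
        simp only [hemb0, if_neg hn]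
        exact hSnotF _ _)
    exact Subgroup.subset_closure ⟨a, b, hab⟩
  · -- permutations fixing `setE` pointwise, i.e. supported in `setT ∪ setF`
    intro τ hτ
    set S : Set (Ω × Jt) := setT Ω ∪ setF Ω with hSdef
    have hsupp : ∀ x ∉ S, τ x = x := by
      intro x hx
      apply hτ
      have hx2 : x ∈ setE Ω ∪ setT Ω ∪ setF Ω := by rw [sets_cover]; trivial
      rcases hx2 with (h | h) | h
      · exact h
      · exact absurd (Or.inl h) hx
      · exact absurd (Or.inr h) hx
    have hSnotE : ∀ (x : Ω) (k : ℕ), (x, (Sum.inl k : Jt)) ∉ S := by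
      rintro x k (⟨k', hk⟩ | ⟨k', hk⟩) <;> simp at hk
    set emb0 : ↥S × ℤ → Ω × Jt := fun sn =>
      if sn.2 = 0 then sn.1.val
      else (sn.1.val.1, Sum.inl (Encodable.encode (sn.1.val.2, sn.2))) with hemb0
    have hinj : Function.Injective emb0 := by
      rintro ⟨s, n⟩ ⟨s', n'⟩ h
      rw [hemb0] at h
      simp only at h
      by_cases hn : n = 0 <;> by_cases hn' : n' = 0
      · rw [if_pos hn, if_pos hn'] at h
        subst hn; subst hn'
        exact Prod.ext (Subtype.ext h) rfl
      · rw [if_pos hn, if_neg hn'] at h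
        exfalso
        have hs := s.2
        rw [h] at hs
        rcases hs with ⟨k, hk⟩ | ⟨k, hk⟩ <;> simp at hk
      · rw [if_neg hn, if_pos hn'] at h
        exfalso
        have hs := s'.2
        rw [← h] at hs
        rcases hs with ⟨k, hk⟩ | ⟨k, hk⟩ <;> simp at hk
      · rw [if_neg hn, if_neg hn'] at h
        have h1 := congrArg Prod.fst h
        have h2 := congrArg Prod.snd h
        simp only at h1 h2
        have h3 := Encodable.encode_injective (Sum.inl_injective h2)
        have h4 : s.val.2 = s'.val.2 := congrArg Prod.fst h3
        have h5 : n = n' := congrArg Prod.snd h3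
        refine Prod.ext (Subtype.ext (Prod.ext h1 h4)) h5
    obtain ⟨a, b, hab⟩ := supported_is_commutator τ hsupp ⟨emb0, hinj⟩
      (fun s => by simp [hemb0])
      (fun s n hn => by
        show emb0 (s, n) ∉ S
        simp only [hemb0, if_neg hn]
        exact hSnotE _ _)
    exact Subgroup.subset_closure ⟨a, b, hab⟩

/-- Transporting membership in the commutator closure along a group isomorphism. -/
theorem mem_commClosure_of_mulEquiv {G H : Type*} [Group G] [Group H] (e : G ≃* H) (x : G)
    (hx : e x ∈ Subgroup.closure {g : H | ∃ a b, g = a * b * a⁻¹ * b⁻¹}) :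
    x ∈ Subgroup.closure {g : G | ∃ a b, g = a * b * a⁻¹ * b⁻¹} := by
  have main : ∀ y ∈ Subgroup.closure {g : H | ∃ a b, g = a * b * a⁻¹ * b⁻¹},
      e.symm y ∈ Subgroup.closure {g : G | ∃ a b, g = a * b * a⁻¹ * b⁻¹} := by
    intro y hy
    induction hy using Subgroup.closure_induction with
    | mem z hz =>
      obtain ⟨a, b, rfl⟩ := hz
      apply Subgroup.subset_closure
      exact ⟨e.symm a, e.symm b, by simp [map_mul]⟩
    | one => simpa using Subgroup.one_mem _
    | mul z w _ _ hz hw => rw [map_mul]; exact Subgroup.mul_mem _ hz hw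
    | inv z _ hz => rw [map_inv]; exact Subgroup.inv_mem _ hz
  have := main (e x) hx
  rwa [MulEquiv.symm_apply_apply] at this

/-- Every permutation of an infinite type is a product of commutators. -/
theorem perm_mem_commClosure (w : Equiv.Perm Ω) :
    w ∈ Subgroup.closure {g : Equiv.Perm Ω | ∃ a b, g = a * b * a⁻¹ * b⁻¹} := by
  have hcard : #Ω = #(Ω × Jt) := by
    rw [Cardinal.mk_prod, Cardinal.mk_denumerable Jt, Cardinal.lift_aleph0, Cardinal.lift_uzero]
    exact (Cardinal.mul_eq_left (Cardinal.aleph0_le_mk Ω) (Cardinal.aleph0_le_mk Ω)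
      Cardinal.aleph0_ne_zero).symm
  obtain ⟨E₀⟩ := Cardinal.eq.mp hcard
  exact mem_commClosure_of_mulEquiv (permME E₀) w (perm_prod_mem_commClosure Ω _)

end Perfect


theorem uncountableCofinality_sym' (Ω : Type*) [Infinite Ω]
    (H : ℕ → Subgroup (Equiv.Perm Ω))
    (hchain : ∀ n, H n < H (n + 1))
    (hproper : ∀ n, H n ≠ ⊤)
    (hunion : ∀ g : Equiv.Perm Ω, ∃ n, g ∈ H n) : False := by
  classical
  -- monotonicity of the chain
  have hmono : ∀ a b : ℕ, a ≤ b → H a ≤ H b := by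
    intro a b hab
    induction b with
    | zero =>
      rw [Nat.le_zero] at hab; subst hab; exact le_refl _
    | succ n ih =>
      rcases Nat.lt_or_ge a (n + 1) with h | h
      · exact (ih (Nat.lt_succ_iff.mp h)).trans (le_of_lt (hchain n))
      · have : a = n + 1 := le_antisymm hab h
        subst this; exact le_refl _
  -- transport everything to `X := Ω × Jt`
  have hcard : #Ω = #(Ω × Jt) := by
    rw [Cardinal.mk_prod, Cardinal.mk_denumerable Jt, Cardinal.lift_aleph0, Cardinal.lift_uzero]
    exact (Cardinal.mul_eq_left (Cardinal.aleph0_le_mk Ω) (Cardinal.aleph0_le_mk Ω)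
      Cardinal.aleph0_ne_zero).symm
  obtain ⟨E₀⟩ := Cardinal.eq.mp hcard
  set ψ : Equiv.Perm Ω ≃* Equiv.Perm (Ω × Jt) := permME E₀ with hψ
  set H' : ℕ → Subgroup (Equiv.Perm (Ω × Jt)) := fun n => (H n).map ψ.toMonoidHom with hH'
  have hmono' : ∀ a b : ℕ, a ≤ b → H' a ≤ H' b := fun a b hab =>
    Subgroup.map_mono (hmono a b hab)
  have hunion' : ∀ g : Equiv.Perm (Ω × Jt), ∃ n, g ∈ H' n := by
    intro g
    obtain ⟨n, hn⟩ := hunion (ψ.symm g)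
    exact ⟨n, ⟨ψ.symm g, hn, by simp⟩⟩
  -- level function
  choose lv hlv using hunion'
  -- step 1: find a block whose twisted copies all lie in one level of the chain
  set zA : ℕ → Equiv.Perm (Ω × Jt) := fun j =>
    st (Equiv.swap (Sum.inl j : Jt) (Sum.inr (Sum.inl j))) with hzA
  set zB : ℕ → Equiv.Perm (Ω × Jt) := fun j =>
    st (Equiv.swap (Sum.inl j : Jt) (Sum.inr (Sum.inr j))) with hzB
  set K : ℕ → ℕ := fun j => max j (max (lv (zA j)) (lv (zB j))) with hK
  set φA : ℕ → Equiv.Perm Ω → Equiv.Perm (Ω × Jt) := fun j c =>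
    bp (fun t => if t = (Sum.inl j : Jt) then c else
      if t = Sum.inr (Sum.inl j) then c⁻¹ else 1) with hφA
  set φB : ℕ → Equiv.Perm Ω → Equiv.Perm (Ω × Jt) := fun j c =>
    bp (fun t => if t = (Sum.inl j : Jt) then c else
      if t = Sum.inr (Sum.inr j) then c⁻¹ else 1) with hφB
  have step1 : ∃ j, ∀ c : Equiv.Perm Ω, φA j c ∈ H' (K j) ∧ φB j c ∈ H' (K j) := by
    by_contra hbad
    simp only [not_exists, not_forall] at hbad
    choose c hc using hbad
    set f : Jt → Equiv.Perm Ω := fun t => Sum.rec (fun i => c i) (fun _ => 1) t with hf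
    set D : Equiv.Perm (Ω × Jt) := bp f with hD
    set N : ℕ := lv D with hN
    -- the two basic computations
    have hWA : D * (zA N * D * (zA N)⁻¹)⁻¹ = φA N (c N) := by
      rw [hD, hzA, st_conj_bp, bp_inv, bp_mul, hφA]
      congr 1
      funext t
      rw [Equiv.swap_inv]
      rcases t with i | i | i
      · by_cases hi : i = N
        · subst hi
          rw [Equiv.swap_apply_left]
          simp [hf]
        · rw [Equiv.swap_apply_of_ne_of_ne (by simp [hi]) (by simp)]
          simp [hf, hi]
      · by_cases hi : i = N
        · subst hi
          rw [Equiv.swap_apply_right]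
          simp [hf]
        · rw [Equiv.swap_apply_of_ne_of_ne (by simp) (by simp [hi])]
          simp [hf, hi]
      · rw [Equiv.swap_apply_of_ne_of_ne (by simp) (by simp)]
        simp [hf]
    have hWB : D * (zB N * D * (zB N)⁻¹)⁻¹ = φB N (c N) := by
      rw [hD, hzB, st_conj_bp, bp_inv, bp_mul, hφB]
      congr 1
      funext t
      rw [Equiv.swap_inv]
      rcases t with i | i | i
      · by_cases hi : i = N
        · subst hi
          rw [Equiv.swap_apply_left]
          simp [hf]
        · rw [Equiv.swap_apply_of_ne_of_ne (by simp [hi]) (by simp)]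
          simp [hf, hi]
      · rw [Equiv.swap_apply_of_ne_of_ne (by simp) (by simp)]
        simp [hf]
      · by_cases hi : i = N
        · subst hi
          rw [Equiv.swap_apply_right]
          simp [hf]
        · rw [Equiv.swap_apply_of_ne_of_ne (by simp) (by simp [hi])]
          simp [hf, hi]
    -- memberships
    have hDK : D ∈ H' (K N) := hmono' N (K N) (le_max_left _ _) (hlv D)
    have hzAK : zA N ∈ H' (K N) :=
      hmono' _ _ ((le_max_left _ _).trans (le_max_right _ _)) (hlv (zA N))
    have hzBK : zB N ∈ H' (K N) :=
      hmono' _ _ ((le_max_right _ _).trans (le_max_right _ _)) (hlv (zB N))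
    have hmemA : φA N (c N) ∈ H' (K N) := by
      rw [← hWA]
      exact mul_mem hDK (inv_mem (mul_mem (mul_mem hzAK hDK) (inv_mem hzAK)))
    have hmemB : φB N (c N) ∈ H' (K N) := by
      rw [← hWB]
      exact mul_mem hDK (inv_mem (mul_mem (mul_mem hzBK hDK) (inv_mem hzBK)))
    exact hc N ⟨hmemA, hmemB⟩
  obtain ⟨j₀, hgood⟩ := step1
  set t₀ : Jt := Sum.inl j₀ with ht₀
  set K₀ : ℕ := K j₀ with hK₀
  -- step 1.5 : the whole symmetric group of the block `t₀` lies in `H' K₀`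
  have hcommstep : ∀ cc dd : Equiv.Perm Ω,
      ione t₀ (cc * dd * cc⁻¹ * dd⁻¹) ∈ H' K₀ := by
    intro cc dd
    have hidq : φA j₀ cc * φB j₀ dd * (φA j₀ cc)⁻¹ * (φB j₀ dd)⁻¹
        = ione t₀ (cc * dd * cc⁻¹ * dd⁻¹) := by
      rw [hφA, hφB, bp_inv, bp_inv, bp_mul, bp_mul, bp_mul, ione]
      congr 1
      funext t
      rcases t with i | i | i
      · by_cases hi : i = j₀
        · subst hi; simp [ht₀]
        · simp [ht₀, hi]
      · by_cases hi : i = j₀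
        · subst hi; simp [ht₀]
        · simp [ht₀, hi]
      · by_cases hi : i = j₀
        · subst hi; simp [ht₀]
        · simp [ht₀, hi]
    rw [← hidq]
    have hA := (hgood cc).1
    have hB := (hgood dd).2
    exact mul_mem (mul_mem (mul_mem hA hB) (inv_mem hA)) (inv_mem hB)
  have hful : ∀ w : Equiv.Perm Ω, ione t₀ w ∈ H' K₀ := by
    intro w
    have hw := perm_mem_commClosure Ω w
    induction hw using Subgroup.closure_induction with
    | mem z hz =>
      obtain ⟨a, b, rfl⟩ := hz
      exact hcommstep a b
    | one =>
      rw [ione_one]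
      exact Subgroup.one_mem _
    | mul z w' _ _ hz hw' =>
      rw [← ione_mul]
      exact mul_mem hz hw'
    | inv z _ hz =>
      rw [ione_inv]
      exact inv_mem hz
  -- Step 2 : conjugating the block symmetric group over the two "moieties"
  set B : Set (Ω × Jt) := {p | p.2 = t₀} with hB
  have eBΩ : ↥B ≃ Ω :=
    { toFun := fun b => b.val.1
      invFun := fun x => ⟨(x, t₀), rfl⟩
      left_inv := by
        rintro ⟨⟨x, j⟩, hj⟩
        exact Subtype.ext (Prod.ext rfl (show t₀ = j from hj.symm))
      right_inv := fun x => rfl }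
  have hBcard : #↥B = #(Ω × Jt) := (Cardinal.mk_congr eBΩ).trans hcard
  have hBccard : #↥(Bᶜ) = #(Ω × Jt) := by
    apply le_antisymm (Cardinal.mk_set_le _)
    rw [← setF_card Ω]
    apply Cardinal.mk_le_mk_of_subset
    rintro p ⟨k, hk⟩
    show ¬(p.2 = t₀)
    rw [hk, ht₀]
    simp
  have hSUcard : #↥(setE Ω ∪ setT Ω) = #(Ω × Jt) := by
    apply le_antisymm (Cardinal.mk_set_le _)
    rw [← setE_card Ω]
    exact Cardinal.mk_le_mk_of_subset Set.subset_union_left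
  have hSVcard : #↥(setT Ω ∪ setF Ω) = #(Ω × Jt) := by
    apply le_antisymm (Cardinal.mk_set_le _)
    rw [← setT_card Ω]
    exact Cardinal.mk_le_mk_of_subset Set.subset_union_left
  obtain ⟨eU⟩ := Cardinal.eq.mp (hBcard.trans hSUcard.symm)
  obtain ⟨eUc⟩ := Cardinal.eq.mp (hBccard.trans (setF_card Ω).symm)
  obtain ⟨eV⟩ := Cardinal.eq.mp (hBcard.trans hSVcard.symm)
  obtain ⟨eVc⟩ := Cardinal.eq.mp (hBccard.trans (setE_card Ω).symm)
  have hdisjU : Disjoint (setE Ω ∪ setT Ω) (setF Ω) :=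
    Set.disjoint_union_left.mpr ⟨setE_disj_setF Ω, setT_disj_setF Ω⟩
  have hdisjV : Disjoint (setT Ω ∪ setF Ω) (setE Ω) :=
    Set.disjoint_union_left.mpr ⟨(setE_disj_setT Ω).symm, (setE_disj_setF Ω).symm⟩
  have huniv1 : B ∪ Bᶜ = (setE Ω ∪ setT Ω) ∪ setF Ω := by
    rw [Set.union_compl_self, sets_cover]
  have huniv2 : B ∪ Bᶜ = (setT Ω ∪ setF Ω) ∪ setE Ω := by
    rw [Set.union_compl_self, Set.union_comm, ← Set.union_assoc, sets_cover]
  set g₁ : Equiv.Perm (Ω × Jt) := threePerm B Bᶜ (setE Ω ∪ setT Ω) (setF Ω) eU eUc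
    disjoint_compl_right hdisjU huniv1 with hg₁
  set g₂ : Equiv.Perm (Ω × Jt) := threePerm B Bᶜ (setT Ω ∪ setF Ω) (setE Ω) eV eVc
    disjoint_compl_right hdisjV huniv2 with hg₂
  set M : ℕ := max K₀ (max (lv g₁) (lv g₂)) with hM
  have hg₁M : g₁ ∈ H' M :=
    hmono' _ _ ((le_max_left _ _).trans (le_max_right _ _)) (hlv g₁)
  have hg₂M : g₂ ∈ H' M :=
    hmono' _ _ ((le_max_right _ _).trans (le_max_right _ _)) (hlv g₂)
  have hfulM : ∀ w : Equiv.Perm Ω, ione t₀ w ∈ H' M :=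
    fun w => hmono' _ _ (le_max_left _ _) (hful w)
  have hUstep : ∀ σ : Equiv.Perm (Ω × Jt), (∀ x ∈ setF Ω, σ x = x) → σ ∈ H' M := by
    intro σ hσ
    set τ : Equiv.Perm (Ω × Jt) := g₁⁻¹ * σ * g₁ with hτ
    have hτsupp : ∀ p : Ω × Jt, p.2 ≠ t₀ → τ p = p := by
      intro p hp
      show g₁⁻¹ (σ (g₁ p)) = p
      have hpB : p ∈ Bᶜ := hp
      have h1 : g₁ p ∈ setF Ω := by
        rw [hg₁, threePerm_apply_mem₂ _ _ _ _ _ hpB]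
        exact (eUc ⟨p, hpB⟩).2
      rw [hσ _ h1]
      exact perm_inv_apply_self _ _
    obtain ⟨w, hw⟩ := exists_ione t₀ τ hτsupp
    have hσeq : σ = g₁ * ione t₀ w * g₁⁻¹ := by
      rw [← hw, hτ]
      group
    rw [hσeq]
    exact mul_mem (mul_mem hg₁M (hfulM w)) (inv_mem hg₁M)
  have hVstep : ∀ σ : Equiv.Perm (Ω × Jt), (∀ x ∈ setE Ω, σ x = x) → σ ∈ H' M := by
    intro σ hσ
    set τ : Equiv.Perm (Ω × Jt) := g₂⁻¹ * σ * g₂ with hτ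
    have hτsupp : ∀ p : Ω × Jt, p.2 ≠ t₀ → τ p = p := by
      intro p hp
      show g₂⁻¹ (σ (g₂ p)) = p
      have hpB : p ∈ Bᶜ := hp
      have h1 : g₂ p ∈ setE Ω := by
        rw [hg₂, threePerm_apply_mem₂ _ _ _ _ _ hpB]
        exact (eVc ⟨p, hpB⟩).2
      rw [hσ _ h1]
      exact perm_inv_apply_self _ _
    obtain ⟨w, hw⟩ := exists_ione t₀ τ hτsupp
    have hσeq : σ = g₂ * ione t₀ w * g₂⁻¹ := by
      rw [← hw, hτ]
      group
    rw [hσeq]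
    exact mul_mem (mul_mem hg₂M (hfulM w)) (inv_mem hg₂M)
  have hall : ∀ π : Equiv.Perm (Ω × Jt), π ∈ H' M :=
    factorization_mem (setE_disj_setT Ω) (setE_disj_setF Ω) (setT_disj_setF Ω)
      (sets_cover Ω) (Cardinal.aleph0_le_mk _) (setE_card Ω) (setT_card Ω) (setF_card Ω)
      (H' M) hUstep hVstep
  apply hproper M
  rw [Subgroup.eq_top_iff']
  intro g
  have h1 : ψ g ∈ H' M := hall _
  obtain ⟨g', hg', heq⟩ := h1
  have : g' = g := ψ.injective heq
  rwa [← this]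


end MNproof


/-- The symmetric group of an infinite set has uncountable cofinality
(Macpherson–Neumann): it is not the union of a countable strictly increasing chain of
proper subgroups. -/
theorem uncountableCofinality_sym (Ω : Type*) [Infinite Ω]
    (H : ℕ → Subgroup (Equiv.Perm Ω))
    (hchain : ∀ n, H n < H (n + 1))
    (hproper : ∀ n, H n ≠ ⊤)
    (hunion : ∀ g : Equiv.Perm Ω, ∃ n, g ∈ H n) : False :=
  MNproof.uncountableCofinality_sym' Ω H hchain hproper hunion
end

section
/- In the symmetric group Sym(ℕ), equipped with the topology of pointwise convergence, there exists an element whose conjugacy class is comeagre (i.e. contains a countable intersection of dense open subsets). -/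
/-- The topology of pointwise convergence on `Sym(ℕ)`: the subspace topology inherited
from the product topology on `ℕ → ℕ`, where `ℕ` is discrete. -/
def permPointwiseTopology : TopologicalSpace (Equiv.Perm ℕ) :=
  TopologicalSpace.induced (fun g : Equiv.Perm ℕ => (g : ℕ → ℕ))
    (@Pi.topologicalSpace ℕ (fun _ => ℕ) (fun _ => ⊥))

namespace GenericPerm

open Function Set

attribute [local instance] permPointwiseTopology

/-- cylinders are open -/
lemma cyl_open (σ : ℕ → ℕ) (F : Finset ℕ) :
    IsOpen {h : Equiv.Perm ℕ | ∀ a ∈ F, h a = σ a} := by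
  have hpi : @IsOpen (ℕ → ℕ) (@Pi.topologicalSpace ℕ (fun _ => ℕ) (fun _ => ⊥))
      (Set.pi ↑F (fun a => {σ a})) := by
    refine @isOpen_set_pi (ℕ) (fun _ => ℕ) (fun _ => ⊥) _ _ F.finite_toSet ?_
    intro a _
    exact @isOpen_discrete _ ⊥ (discreteTopology_bot ℕ) _
  have : {h : Equiv.Perm ℕ | ∀ a ∈ F, h a = σ a}
      = (fun g : Equiv.Perm ℕ => (g : ℕ → ℕ)) ⁻¹' (Set.pi ↑F (fun a => {σ a})) := by
    ext h; simp [Set.mem_pi]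
  rw [this]
  exact isOpen_induced hpi

lemma open_of_cyl {S : Set (Equiv.Perm ℕ)}
    (hS : ∀ h ∈ S, ∃ F : Finset ℕ, ∀ h' : Equiv.Perm ℕ, (∀ a ∈ F, h' a = h a) → h' ∈ S) :
    IsOpen S := by
  rw [isOpen_iff_forall_mem_open]
  intro h hh
  obtain ⟨F, hF⟩ := hS h hh
  exact ⟨{h' : Equiv.Perm ℕ | ∀ a ∈ F, h' a = h a}, fun h' hh' => hF h' hh',
    cyl_open h F, fun a _ => rfl⟩

lemma dense_of_cyl {S : Set (Equiv.Perm ℕ)}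
    (hS : ∀ (h₀ : Equiv.Perm ℕ) (F : Finset ℕ), ∃ h ∈ S, ∀ a ∈ F, h a = h₀ a) :
    Dense S := by
  rw [dense_iff_inter_open]
  rintro U hU ⟨h₀, h₀U⟩
  obtain ⟨V, hV, rfl⟩ := isOpen_induced_iff.1 hU
  rw [isOpen_pi_iff] at hV
  obtain ⟨I, u, h1, h2⟩ := hV _ h₀U
  obtain ⟨h, hhS, hagree⟩ := hS h₀ I
  refine ⟨h, h2 ?_, hhS⟩
  intro a ha
  show h a ∈ u a
  rw [hagree a ha]
  exact (h1 a ha).2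

lemma pow_minper (h : Equiv.Perm ℕ) (x : ℕ) (_ : x ∈ periodicPts ⇑h) :
    (h ^ Function.minimalPeriod ⇑h x) x = x := by
  have := @Function.iterate_minimalPeriod _ ⇑h x
  rwa [Equiv.Perm.iterate_eq_pow] at this

lemma pow_ne_of_lt_minper {h : Equiv.Perm ℕ} {x j : ℕ} (h0 : 0 < j)
    (hj : j < Function.minimalPeriod ⇑h x) : (h ^ j) x ≠ x := by
  intro he
  have hp : Function.IsPeriodicPt ⇑h j x := by
    rw [Function.IsPeriodicPt, Function.IsFixedPt, Equiv.Perm.iterate_eq_pow]; exact he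
  exact absurd (hp.minimalPeriod_le h0) (by omega)

lemma minper_eq {h : Equiv.Perm ℕ} {x k : ℕ} (h1 : (h ^ (k + 1)) x = x)
    (h2 : ∀ j, 0 < j → j ≤ k → (h ^ j) x ≠ x) :
    Function.minimalPeriod ⇑h x = k + 1 := by
  have hp : Function.IsPeriodicPt ⇑h (k + 1) x := by
    rw [Function.IsPeriodicPt, Function.IsFixedPt, Equiv.Perm.iterate_eq_pow]; exact h1
  have hmem : x ∈ periodicPts ⇑h := ⟨k + 1, Nat.succ_pos k, hp⟩
  have hle := hp.minimalPeriod_le (Nat.succ_pos k)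
  rcases eq_or_lt_of_le hle with heq | hlt
  · exact heq
  · have hpos := Function.minimalPeriod_pos_iff_mem_periodicPts.2 hmem
    exact absurd (pow_minper h x hmem) (h2 _ hpos (by omega))

lemma periodic_of_finite_supp {h : Equiv.Perm ℕ} (hf : {x | h x ≠ x}.Finite) (n : ℕ) :
    ∃ m, 0 < m ∧ (h ^ m) n = n := by
  have horb : ∀ j : ℕ, (h ^ j) n ∈ insert n {x | h x ≠ x} := by
    intro j
    induction j with
    | zero => simp
    | succ j ih =>
      rw [pow_succ', Equiv.Perm.mul_apply]
      by_cases hmove : h ((h ^ j) n) = (h ^ j) n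
      · rw [hmove]; exact ih
      · refine Set.mem_insert_of_mem _ ?_
        show h (h ((h ^ j) n)) ≠ h ((h ^ j) n)
        intro hfix
        exact hmove (h.injective hfix)
  have hfin : (insert n {x | h x ≠ x}).Finite := hf.insert n
  haveI := hfin.to_subtype
  obtain ⟨j, j', hne, heq⟩ := Finite.exists_ne_map_eq_of_infinite
    (fun j : ℕ => (⟨(h ^ j) n, horb j⟩ : (insert n {x | h x ≠ x} : Set ℕ)))
  have heq' : (h ^ j) n = (h ^ j') n := congrArg Subtype.val heq
  rcases Nat.lt_or_ge j j' with hlt | hge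
  · refine ⟨j' - j, by omega, ?_⟩
    have : (h ^ j) ((h ^ (j' - j)) n) = (h ^ j) n := by
      rw [← Equiv.Perm.mul_apply, ← pow_add]
      rw [show j + (j' - j) = j' by omega]
      exact heq'.symm
    exact (h ^ j).injective this
  · have hlt : j' < j := by omega
    refine ⟨j - j', by omega, ?_⟩
    have : (h ^ j') ((h ^ (j - j')) n) = (h ^ j') n := by
      rw [← Equiv.Perm.mul_apply, ← pow_add]
      rw [show j' + (j - j') = j by omega]
      exact heq'
    exact (h ^ j').injective this

lemma exists_finiteSupp_agree (h₀ : Equiv.Perm ℕ) (F : Finset ℕ) :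
    ∃ h : Equiv.Perm ℕ, (∀ a ∈ F, h a = h₀ a) ∧ {x | h x ≠ x}.Finite := by
  classical
  set G : Finset ℕ := F ∪ F.image ⇑h₀ with hG
  have hFG : F ⊆ G := Finset.subset_union_left
  have hIG : F.image ⇑h₀ ⊆ G := Finset.subset_union_right
  set A : Finset ℕ := G \ F with hA
  set B : Finset ℕ := G \ F.image ⇑h₀ with hB
  have hcardim : (F.image ⇑h₀).card = F.card := Finset.card_image_of_injective _ h₀.injective
  have hcard : A.card = B.card := by
    rw [hA, hB, Finset.card_sdiff_of_subset hFG, Finset.card_sdiff_of_subset hIG, hcardim]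
  have hcard' : Fintype.card A = Fintype.card B := by
    rw [Fintype.card_coe, Fintype.card_coe, hcard]
  obtain e : (A : Type) ≃ (B : Type) := Fintype.equivOfCardEq hcard'
  set f : ℕ → ℕ := fun x => if hx : x ∈ F then h₀ x else if hx' : x ∈ A then ↑(e ⟨x, hx'⟩) else x
    with hf
  have hfF : ∀ x ∈ F, f x = h₀ x := by intro x hx; simp [hf, hx]
  have hmapF : ∀ x ∈ F, f x ∈ F.image ⇑h₀ := by
    intro x hx; rw [hfF x hx]; exact Finset.mem_image_of_mem _ hx
  have hmapA : ∀ x, x ∈ A → f x ∈ B := by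
    intro x hx
    have hxF : x ∉ F := (Finset.mem_sdiff.1 hx).2
    simp only [hf, dif_neg hxF, dif_pos hx]
    exact (e ⟨x, hx⟩).2
  have hfix : ∀ x, x ∉ G → f x = x := by
    intro x hx
    have hxF : x ∉ F := fun hc => hx (hFG hc)
    have hxA : x ∉ A := fun hc => hx (Finset.mem_sdiff.1 hc).1
    simp [hf, hxF, hxA]
  have hmapG : ∀ x ∈ G, f x ∈ G := by
    intro x hx
    by_cases hxF : x ∈ F
    · exact hIG (hmapF x hxF)
    · have hxA : x ∈ A := Finset.mem_sdiff.2 ⟨hx, hxF⟩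
      exact Finset.sdiff_subset (hmapA x hxA)
  have hBnotim : ∀ y ∈ B, y ∉ F.image ⇑h₀ := fun y hy => (Finset.mem_sdiff.1 hy).2
  have hinj : Function.Injective f := by
    intro x y hxy
    by_cases hxF : x ∈ F <;> by_cases hyF : y ∈ F
    · exact h₀.injective (by rwa [hfF x hxF, hfF y hyF] at hxy)
    · by_cases hyA : y ∈ A
      · exact absurd (hxy ▸ hmapF x hxF) (hBnotim _ (hmapA y hyA))
      · have hyG : y ∉ G := fun hc => hyA (Finset.mem_sdiff.2 ⟨hc, hyF⟩)
        rw [hfix y hyG] at hxy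
        exact absurd (hxy ▸ hIG (hmapF x hxF)) hyG
    · by_cases hxA : x ∈ A
      · exact absurd (hxy ▸ hmapA x hxA) (fun hc => (hBnotim _ hc) (hmapF y hyF))
      · have hxG : x ∉ G := fun hc => hxA (Finset.mem_sdiff.2 ⟨hc, hxF⟩)
        rw [hfix x hxG] at hxy
        exact absurd (hxy ▸ hIG (hmapF y hyF)) hxG
    · by_cases hxA : x ∈ A <;> by_cases hyA : y ∈ A
      · have hx' : f x = ↑(e ⟨x, hxA⟩) := by simp [hf, hxF, hxA]
        have hy' : f y = ↑(e ⟨y, hyA⟩) := by simp [hf, hyF, hyA]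
        rw [hx', hy'] at hxy
        have := e.injective (Subtype.ext hxy)
        exact congrArg Subtype.val this
      · have hyG : y ∉ G := fun hc => hyA (Finset.mem_sdiff.2 ⟨hc, hyF⟩)
        rw [hfix y hyG] at hxy
        exact absurd (hxy ▸ Finset.sdiff_subset (hmapA x hxA)) hyG
      · have hxG : x ∉ G := fun hc => hxA (Finset.mem_sdiff.2 ⟨hc, hxF⟩)
        rw [hfix x hxG] at hxy
        exact absurd (hxy.symm ▸ Finset.sdiff_subset (hmapA y hyA)) hxG
      · have hxG : x ∉ G := fun hc => hxA (Finset.mem_sdiff.2 ⟨hc, hxF⟩)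
        have hyG : y ∉ G := fun hc => hyA (Finset.mem_sdiff.2 ⟨hc, hyF⟩)
        rw [hfix x hxG, hfix y hyG] at hxy
        exact hxy
  have hsurj : Function.Surjective f := by
    intro y
    by_cases hy : y ∈ G
    · obtain ⟨a, ha, hay⟩ := Finset.surj_on_of_inj_on_of_card_le (s := G) (t := G)
        (fun a _ => f a) (fun a ha => hmapG a ha)
        (fun a₁ a₂ _ _ hq => hinj hq) le_rfl y hy
      exact ⟨a, hay.symm⟩
    · exact ⟨y, hfix y hy⟩
  refine ⟨Equiv.ofBijective f ⟨hinj, hsurj⟩, ?_, ?_⟩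
  · intro a ha
    show f a = h₀ a
    exact hfF a ha
  · refine Set.Finite.subset G.finite_toSet ?_
    intro x hx
    by_contra hxG
    exact hx (hfix x hxG)

/-- equiv from `Fin (k+1)` onto the interval `[base, base+k]` as a subtype -/
def intervalEquiv (base k : ℕ) : Fin (k + 1) ≃ {x : ℕ // base ≤ x ∧ x < base + (k + 1)} where
  toFun i := ⟨base + i, ⟨Nat.le_add_right _ _, by have := i.isLt; omega⟩⟩
  invFun x := ⟨x.1 - base, by have := x.2; omega⟩
  left_inv i := by ext; simp
  right_inv x := by
    ext
    have := x.2
    simp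
    omega

lemma exists_cycle_agree (h₀ : Equiv.Perm ℕ) (F : Finset ℕ) (k M : ℕ) :
    ∃ h : Equiv.Perm ℕ, (∀ a ∈ F, h a = h₀ a) ∧ {x | h x ≠ x}.Finite ∧
      ∃ x, M < x ∧ Function.minimalPeriod ⇑h x = k + 1 := by
  classical
  obtain ⟨h₁, hagree, hfin⟩ := exists_finiteSupp_agree h₀ F
  set suppF : Finset ℕ := hfin.toFinset ∪ F with hsuppF
  set base : ℕ := suppF.sup id + M + 1 with hbase
  have hbig : ∀ y ∈ suppF, y < base := by
    intro y hy
    have := Finset.le_sup (f := id) hy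
    simp only [id] at this
    omega
  have hsupp_lt : ∀ y, h₁ y ≠ y → y < base := by
    intro y hy
    exact hbig y (Finset.mem_union_left _ (hfin.mem_toFinset.2 hy))
  have hval_lt : ∀ y, h₁ y ≠ y → h₁ y < base := by
    intro y hy
    refine hsupp_lt (h₁ y) ?_
    intro hfix2
    exact hy (h₁.injective hfix2)
  have hF_lt : ∀ a ∈ F, a < base := fun a ha => hbig a (Finset.mem_union_right _ ha)
  set P : ℕ → Prop := fun x => base ≤ x ∧ x < base + (k + 1) with hP
  set c : Equiv.Perm ℕ := (finRotate (k + 1)).extendDomain (intervalEquiv base k) with hc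
  have hcfix : ∀ y, y < base → c y = y := by
    intro y hy
    refine Equiv.Perm.extendDomain_apply_not_subtype _ _ ?_
    intro hPy
    exact absurd hPy.1 (by omega)
  have hcval : ∀ i : Fin (k + 1), c (base + i) = base + ((finRotate (k + 1)) i : ℕ) := by
    intro i
    have : (base + (i : ℕ)) = ((intervalEquiv base k) i : ℕ) := rfl
    rw [this]
    have := Equiv.Perm.extendDomain_apply_image (finRotate (k + 1)) (intervalEquiv base k) i
    rw [this]
    rfl
  set h : Equiv.Perm ℕ := c * h₁ with hh
  have hfix1 : ∀ y, base ≤ y → h₁ y = y := by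
    intro y hy
    by_contra hne
    exact absurd (hsupp_lt y hne) (by omega)
  have hstep : ∀ i : ℕ, i < k → h (base + i) = base + (i + 1) := by
    intro i hi
    rw [hh, Equiv.Perm.mul_apply, hfix1 _ (Nat.le_add_right _ _)]
    have := hcval ⟨i, by omega⟩
    simp only [Fin.val_mk] at this
    rw [this]
    congr 1
    rw [finRotate_succ_apply, Fin.val_add_one]
    rw [if_neg]
    intro hlast
    have := congrArg Fin.val hlast
    simp [Fin.last] at this
    omega
  have hlaststep : h (base + k) = base := by
    rw [hh, Equiv.Perm.mul_apply, hfix1 _ (Nat.le_add_right _ _)]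
    have := hcval ⟨k, by omega⟩
    simp only [Fin.val_mk] at this
    rw [this]
    have hlk : (⟨k, by omega⟩ : Fin (k + 1)) = Fin.last k := rfl
    rw [hlk, finRotate_succ_apply, Fin.val_add_one, if_pos rfl]
  have hpows : ∀ i : ℕ, i ≤ k → (h ^ i) base = base + i := by
    intro i hi
    induction i with
    | zero => simp
    | succ i ih =>
      rw [pow_succ', Equiv.Perm.mul_apply, ih (by omega)]
      exact hstep i (by omega)
  refine ⟨h, ?_, ?_, base, by omega, ?_⟩
  · intro a ha
    have hlt : h₁ a < base := by
      by_cases hmv : h₁ a = a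
      · rw [hmv]; exact hF_lt a ha
      · exact hval_lt a hmv
    rw [hh, Equiv.Perm.mul_apply, hcfix _ hlt, hagree a ha]
  · refine Set.Finite.subset (hfin.union (Set.finite_Icc base (base + k))) ?_
    intro x hx
    by_cases hmv : h₁ x = x
    · right
      have hcx : c x ≠ x := by
        intro hcc
        apply hx
        show (c * h₁) x = x
        rw [Equiv.Perm.mul_apply, hmv, hcc]
      by_contra hicc
      simp only [Set.mem_Icc, not_and_or, not_le] at hicc
      rcases hicc with hlo | hhi
      · exact hcx (hcfix x hlo)
      · refine hcx (Equiv.Perm.extendDomain_apply_not_subtype _ _ ?_)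
        intro hPy
        have := hPy.2
        omega
    · exact Or.inl hmv
  · refine minper_eq ?_ ?_
    · rw [pow_succ', Equiv.Perm.mul_apply, hpows k le_rfl]
      exact hlaststep
    · intro j hj0 hjk
      rw [hpows j hjk]
      omega

/-- Canonical model: for each `k`, countably many `(k+1)`-cycles. -/
abbrev T := Σ k : ℕ, ℕ × Fin (k + 1)

def sPerm : Equiv.Perm T :=
  Equiv.sigmaCongrRight (fun k => (Equiv.refl ℕ).prodCongr (finRotate (k + 1)))

instance : Infinite T :=
  Infinite.of_injective (fun n => (⟨0, n, 0⟩ : T)) (fun a b hab => by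
    simpa using congrArg (fun t : T => t.2.1) hab)

lemma conj_of_props {h : Equiv.Perm ℕ}
    (H1 : ∀ n, ∃ m, 0 < m ∧ (h ^ m) n = n)
    (H2 : ∀ k M, ∃ x, M < x ∧ Function.minimalPeriod ⇑h x = k + 1) :
    ∃ φ : T ≃ ℕ, ∀ t, h (φ t) = φ (sPerm t) := by
  classical
  have per : ∀ x, x ∈ periodicPts ⇑h := by
    intro x
    obtain ⟨m, hm, hfix⟩ := H1 x
    exact ⟨m, hm, by
      rw [Function.IsPeriodicPt, Function.IsFixedPt, Equiv.Perm.iterate_eq_pow]; exact hfix⟩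
  have perpos : ∀ x, 0 < Function.minimalPeriod ⇑h x := fun x =>
    Function.minimalPeriod_pos_iff_mem_periodicPts.2 (per x)
  have powmod : ∀ (x m : ℕ), (h ^ (m % Function.minimalPeriod ⇑h x)) x = (h ^ m) x := by
    intro x m
    have := @Function.iterate_mod_minimalPeriod_eq _ ⇑h x m
    rwa [Equiv.Perm.iterate_eq_pow, Equiv.Perm.iterate_eq_pow] at this
  have mpiter : ∀ (x j : ℕ),
      Function.minimalPeriod ⇑h ((h ^ j) x) = Function.minimalPeriod ⇑h x := by
    intro x j
    have := Function.minimalPeriod_apply_iterate (per x) j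
    rwa [Equiv.Perm.iterate_eq_pow] at this
  set R : ℕ → Set ℕ :=
    fun k => {x | Function.minimalPeriod ⇑h x = k + 1 ∧ ∀ j, x ≤ (h ^ j) x} with hR
  have mino : ∀ x : ℕ, ∃ r j : ℕ, Function.minimalPeriod ⇑h r = Function.minimalPeriod ⇑h x ∧
      (∀ j', r ≤ (h ^ j') r) ∧ j < Function.minimalPeriod ⇑h x ∧ (h ^ j) r = x := by
    intro x
    set p := Function.minimalPeriod ⇑h x with hp
    have hppos := perpos x
    set O : Finset ℕ := (Finset.range p).image (fun j => (h ^ j) x) with hO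
    have hmemO : ∀ m : ℕ, (h ^ m) x ∈ O := by
      intro m
      rw [← powmod x m]
      exact Finset.mem_image_of_mem _ (Finset.mem_range.2 (Nat.mod_lt _ hppos))
    have hne : O.Nonempty := ⟨x, by simpa using hmemO 0⟩
    set r := O.min' hne with hr
    obtain ⟨j0, hj0, hj0r⟩ := Finset.mem_image.1 (O.min'_mem hne)
    rw [Finset.mem_range] at hj0
    rw [← hr] at hj0r
    have hmpr : Function.minimalPeriod ⇑h r = p := by rw [← hj0r]; exact mpiter x j0
    have hminr : ∀ j', r ≤ (h ^ j') r := by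
      intro j'
      have hval : (h ^ j') r = (h ^ (j' + j0)) x := by
        rw [← hj0r, ← Equiv.Perm.mul_apply, ← pow_add]
      rw [hval]
      exact O.min'_le _ (hmemO _)
    have hx_r : (h ^ (p - j0)) r = x := by
      rw [← hj0r, ← Equiv.Perm.mul_apply, ← pow_add, show p - j0 + j0 = p by omega]
      exact pow_minper h x (per x)
    refine ⟨r, (p - j0) % p, hmpr, hminr, Nat.mod_lt _ hppos, ?_⟩
    have hmod := powmod r (p - j0)
    rw [hmpr] at hmod
    rw [hmod, hx_r]
  have hRinf : ∀ k, (R k).Infinite := by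
    intro k
    have hPinf : {x | Function.minimalPeriod ⇑h x = k + 1}.Infinite := by
      intro hfin
      obtain ⟨b, hb⟩ := hfin.bddAbove
      obtain ⟨x, hxb, hxmp⟩ := H2 k b
      exact absurd (hb (show x ∈ _ from hxmp)) (by omega)
    intro hRfin
    apply hPinf
    refine Set.Finite.subset (Set.Finite.biUnion hRfin
      (fun r _ => (Set.finite_Iio (k + 1)).image (fun j => (h ^ j) r))) ?_
    intro x hx
    obtain ⟨r, j, hmpr, hminr, hjlt, hjr⟩ := mino x
    simp only [Set.mem_setOf_eq] at hx
    rw [hx] at hmpr hjlt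
    exact Set.mem_biUnion (show r ∈ R k from ⟨hmpr, hminr⟩) ⟨j, hjlt, hjr⟩
  have hcnt : ∀ k, Nonempty (ℕ ≃ (R k)) := by
    intro k
    haveI := (hRinf k).to_subtype
    exact nonempty_equiv_of_countable
  set bk : ∀ k, ℕ ≃ (R k) := fun k => (hcnt k).some with hbk
  have hmpR : ∀ k (r : R k), Function.minimalPeriod ⇑h ↑r = k + 1 := fun k r => r.2.1
  have hminR : ∀ k (r : R k) (j : ℕ), (r : ℕ) ≤ (h ^ j) ↑r := fun k r j => r.2.2 j
  have hpowinj : ∀ k (r : R k) (i i' : ℕ), i < k + 1 → i' < k + 1 →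
      (h ^ i) (r : ℕ) = (h ^ i') (r : ℕ) → i = i' := by
    intro k r i i' hi hi' heq
    rcases Nat.lt_trichotomy i i' with hlt | heqv | hgt
    · exfalso
      have hstep : (h ^ i) ((h ^ (i' - i)) (r : ℕ)) = (h ^ i) (r : ℕ) := by
        rw [← Equiv.Perm.mul_apply, ← pow_add, show i + (i' - i) = i' by omega]
        exact heq.symm
      exact pow_ne_of_lt_minper (j := i' - i) (by omega)
        (by rw [hmpR k r]; omega) ((h ^ i).injective hstep)
    · exact heqv
    · exfalso
      have hstep : (h ^ i') ((h ^ (i - i')) (r : ℕ)) = (h ^ i') (r : ℕ) := by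
        rw [← Equiv.Perm.mul_apply, ← pow_add, show i' + (i - i') = i by omega]
        exact heq
      exact pow_ne_of_lt_minper (j := i - i') (by omega)
        (by rw [hmpR k r]; omega) ((h ^ i').injective hstep)
  set f : T → ℕ := fun t => (h ^ (t.2.2 : ℕ)) ↑(bk t.1 t.2.1) with hf
  have hmpf : ∀ t : T, Function.minimalPeriod ⇑h (f t) = t.1 + 1 := by
    intro t
    show Function.minimalPeriod ⇑h ((h ^ (t.2.2 : ℕ)) ↑(bk t.1 t.2.1)) = t.1 + 1
    rw [mpiter, hmpR]
  have hcycR : ∀ k (r : R k), (h ^ (k + 1)) (r : ℕ) = r := by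
    intro k r
    have := pow_minper h ↑r (per _)
    rwa [hmpR k r] at this
  have hinj : Function.Injective f := by
    rintro ⟨k, n, i⟩ ⟨k', n', i'⟩ heq
    have hk : k = k' := by
      have h1 := hmpf ⟨k, n, i⟩
      have h2 := hmpf ⟨k', n', i'⟩
      rw [heq] at h1
      simp only at h1 h2
      omega
    subst hk
    simp only [hf] at heq
    set r := bk k n with hrdef
    set r' := bk k n' with hr'def
    have hrval : (r : ℕ) = (h ^ (k + 1 - (i : ℕ) + (i' : ℕ))) (r' : ℕ) := by
      rw [pow_add, Equiv.Perm.mul_apply]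
      have hswap : (h ^ ((i' : ℕ))) (r' : ℕ) = (h ^ ((i : ℕ))) (r : ℕ) := heq.symm
      rw [hswap, ← Equiv.Perm.mul_apply, ← pow_add,
        show k + 1 - (i : ℕ) + (i : ℕ) = k + 1 by have := i.isLt; omega]
      exact (hcycR k r).symm
    have hr'val : (r' : ℕ) = (h ^ (k + 1 - (i' : ℕ) + (i : ℕ))) (r : ℕ) := by
      rw [pow_add, Equiv.Perm.mul_apply]
      rw [heq, ← Equiv.Perm.mul_apply, ← pow_add,
        show k + 1 - (i' : ℕ) + (i' : ℕ) = k + 1 by have := i'.isLt; omega]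
      exact (hcycR k r').symm
    have hle1 : (r' : ℕ) ≤ r := hrval ▸ hminR k r' _
    have hle2 : (r : ℕ) ≤ r' := hr'val ▸ hminR k r _
    have hrr : r = r' := Subtype.ext (le_antisymm hle2 hle1)
    have hnn : n = n' := (bk k).injective (hrdef ▸ hr'def ▸ hrr)
    subst hnn
    have hii : i = i' := by
      refine Fin.ext (hpowinj k r i i' i.isLt i'.isLt ?_)
      rw [heq, ← hrr]
    rw [hii]
  have hsurj : Function.Surjective f := by
    intro y
    obtain ⟨r, j, hmpr, hminr, hjlt, hjr⟩ := mino y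
    set p := Function.minimalPeriod ⇑h y with hp
    have hppos : 0 < p := perpos y
    have hrR : r ∈ R (p - 1) := by
      refine ⟨?_, hminr⟩
      rw [hmpr]
      omega
    refine ⟨⟨p - 1, (bk (p - 1)).symm ⟨r, hrR⟩, ⟨j, by omega⟩⟩, ?_⟩
    show (h ^ j) ↑(bk (p - 1) ((bk (p - 1)).symm ⟨r, hrR⟩)) = y
    rw [Equiv.apply_symm_apply]
    exact hjr
  refine ⟨Equiv.ofBijective f ⟨hinj, hsurj⟩, ?_⟩
  rintro ⟨k, n, i⟩
  show h (f ⟨k, n, i⟩) = f (sPerm ⟨k, n, i⟩)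
  have hsp : sPerm ⟨k, n, i⟩ = ⟨k, n, finRotate (k + 1) i⟩ := rfl
  rw [hsp]
  show h ((h ^ (i : ℕ)) ↑(bk k n)) = (h ^ ((finRotate (k + 1) i : Fin (k + 1)) : ℕ)) ↑(bk k n)
  rw [← Equiv.Perm.mul_apply, ← pow_succ']
  rw [finRotate_succ_apply, Fin.val_add_one]
  by_cases hlast : i = Fin.last k
  · rw [if_pos hlast]
    subst hlast
    show (h ^ ((Fin.last k : ℕ) + 1)) ↑(bk k n) = (h ^ 0) ↑(bk k n)
    have hlv : ((Fin.last k : Fin (k + 1)) : ℕ) = k := rfl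
    rw [hlv, pow_zero]
    show (h ^ (k + 1)) ↑(bk k n) = _
    rw [hcycR k (bk k n)]
    rfl
  · rw [if_neg hlast]


def Aset (n : ℕ) : Set (Equiv.Perm ℕ) := {h | ∃ m, 0 < m ∧ (h ^ m) n = n}

def Bset (k M : ℕ) : Set (Equiv.Perm ℕ) :=
  {h | ∃ x, M < x ∧ Function.minimalPeriod ⇑h x = k + 1}

lemma agree_pow {h h' : Equiv.Perm ℕ} {x m : ℕ}
    (hag : ∀ a ∈ (Finset.range m).image (fun j => (h ^ j) x), h' a = h a) :
    ∀ j ≤ m, (h' ^ j) x = (h ^ j) x := by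
  intro j hj
  induction j with
  | zero => rfl
  | succ j ih =>
    rw [pow_succ', pow_succ', Equiv.Perm.mul_apply, Equiv.Perm.mul_apply, ih (by omega)]
    exact hag _ (Finset.mem_image_of_mem _ (Finset.mem_range.2 (by omega)))

lemma Aset_open (n : ℕ) : IsOpen (Aset n) := by
  refine open_of_cyl ?_
  rintro h ⟨m, hm, hfix⟩
  refine ⟨(Finset.range m).image (fun j => (h ^ j) n), ?_⟩
  intro h' hag
  exact ⟨m, hm, by rw [agree_pow hag m le_rfl]; exact hfix⟩

lemma Aset_dense (n : ℕ) : Dense (Aset n) := by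
  refine dense_of_cyl ?_
  intro h₀ F
  obtain ⟨h, hagree, hfin⟩ := exists_finiteSupp_agree h₀ F
  exact ⟨h, periodic_of_finite_supp hfin n, hagree⟩

lemma Bset_open (k M : ℕ) : IsOpen (Bset k M) := by
  refine open_of_cyl ?_
  rintro h ⟨x, hx, hmp⟩
  refine ⟨(Finset.range (k + 1)).image (fun j => (h ^ j) x), ?_⟩
  intro h' hag
  have hper : x ∈ periodicPts ⇑h :=
    Function.minimalPeriod_pos_iff_mem_periodicPts.1 (by rw [hmp]; omega)
  have hcyc : (h ^ (k + 1)) x = x := by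
    have := pow_minper h x hper
    rwa [hmp] at this
  refine ⟨x, hx, minper_eq ?_ ?_⟩
  · rw [agree_pow hag (k + 1) le_rfl]
    exact hcyc
  · intro j hj0 hjk
    rw [agree_pow hag j (by omega)]
    exact pow_ne_of_lt_minper hj0 (by rw [hmp]; omega)

lemma Bset_dense (k M : ℕ) : Dense (Bset k M) := by
  refine dense_of_cyl ?_
  intro h₀ F
  obtain ⟨h, hagree, _, x, hx, hmp⟩ := exists_cycle_agree h₀ F k M
  exact ⟨h, ⟨x, hx, hmp⟩, hagree⟩

end GenericPerm

/-- There is a generic permutation of `ℕ`: an element of `Sym(ℕ)` whose conjugacy class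
is comeagre in the topology of pointwise convergence. -/
theorem exists_generic_permutation :
    ∃ g : Equiv.Perm ℕ,
      {h : Equiv.Perm ℕ | IsConj g h} ∈ @residual (Equiv.Perm ℕ) permPointwiseTopology := by
  classical
  letI : TopologicalSpace (Equiv.Perm ℕ) := permPointwiseTopology
  have he : Nonempty (GenericPerm.T ≃ ℕ) := nonempty_equiv_of_countable
  obtain ⟨e⟩ := he
  refine ⟨e.permCongr GenericPerm.sPerm, ?_⟩
  have hA : ∀ n, GenericPerm.Aset n ∈ residual (Equiv.Perm ℕ) := fun n =>
    residual_of_dense_open (GenericPerm.Aset_open n) (GenericPerm.Aset_dense n)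
  have hB : ∀ k M, GenericPerm.Bset k M ∈ residual (Equiv.Perm ℕ) := fun k M =>
    residual_of_dense_open (GenericPerm.Bset_open k M) (GenericPerm.Bset_dense k M)
  have hmem : ((⋂ n, GenericPerm.Aset n) ∩ ⋂ k, ⋂ M, GenericPerm.Bset k M)
      ∈ residual (Equiv.Perm ℕ) :=
    Filter.inter_mem (countable_iInter_mem.2 hA)
      (countable_iInter_mem.2 fun k => countable_iInter_mem.2 (hB k))
  refine Filter.mem_of_superset hmem ?_
  rintro h ⟨hA', hB'⟩
  simp only [Set.mem_iInter] at hA' hB'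
  obtain ⟨φ, hφ⟩ := GenericPerm.conj_of_props (fun n => hA' n) (fun k M => hB' k M)
  rw [Set.mem_setOf_eq, isConj_iff]
  refine ⟨e.symm.trans φ, ?_⟩
  ext y
  show ((e.symm.trans φ) * e.permCongr GenericPerm.sPerm * (e.symm.trans φ)⁻¹) y = h y
  simp only [Equiv.Perm.mul_apply]
  have hc : ((e.symm.trans φ)⁻¹ : Equiv.Perm ℕ) y = e (φ.symm y) := rfl
  rw [hc]
  have hg : (e.permCongr GenericPerm.sPerm) (e (φ.symm y)) = e (GenericPerm.sPerm (φ.symm y)) := by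
    simp [Equiv.permCongr_apply]
  rw [hg]
  show φ (e.symm (e (GenericPerm.sPerm (φ.symm y)))) = h y
  rw [Equiv.symm_apply_apply, ← hφ, Equiv.apply_symm_apply]
end
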